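/- Let ρ̃ be a density matrix with trace distance at most ε from ρ = |0⟩⟨0|_A ⊗ (1/2^b) I_B, and partition the n = a+b qubits into C and D with |D| = d > a. If ε + ε' ≤ 1/2 − 2^{a−d−1}, then there is no unitary U such that tr_C(U ρ̃ U†) has trace distance at most ε' from a pure state on D. -/

import Mathlib

open Matrix BigOperators Kronecker
open scoped Classical ComplexOrder

noncomputable section

def ptraceFst {C D : Type*} [Fintype C] (σ : Matrix (C × D) (C × D) ℂ) :
    Matrix D D ℂ := Matrix.of fun y y' => ∑ j : C, σ (j, y) (j, y')

def ptraceSnd {C D : Type*} [Fintype D] (σ : Matrix (C × D) (C × D) ℂ) :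
    Matrix C C ℂ := Matrix.of fun x x' => ∑ j : D, σ (x, j) (x', j)

def traceNorm {n : Type*} [Fintype n] [DecidableEq n] (M : Matrix n n ℂ) : ℝ :=
  ((Matrix.posSemidef_conjTranspose_mul_self M).1.eigenvectorUnitary.1 *
    Matrix.diagonal ((fun x : ℝ => (x : ℂ)) ∘ (√·) ∘ (Matrix.posSemidef_conjTranspose_mul_self M).1.eigenvalues) *
    (star (Matrix.posSemidef_conjTranspose_mul_self M).1.eigenvectorUnitary : Matrix n n ℂ)).trace.re

def traceDist {n : Type*} [Fintype n] [DecidableEq n] (σ σ' : Matrix n n ℂ) : ℝ :=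
  traceNorm (σ - σ') / 2

def IsDensity {n : Type*} [Fintype n] (M : Matrix n n ℂ) : Prop :=
  M.PosSemidef ∧ M.trace = 1

def IsPure {n : Type*} [Fintype n] (σ : Matrix n n ℂ) : Prop :=
  ∃ ψ : n → ℂ, (∑ i, Complex.normSq (ψ i)) = 1 ∧ σ = Matrix.vecMulVec ψ (star ψ)

def inputState (a b : ℕ) :
    Matrix (Fin (2^a) × Fin (2^b)) (Fin (2^a) × Fin (2^b)) ℂ :=
  (Matrix.single 0 0 1) ⊗ₖ (((2:ℂ)^b)⁻¹ • (1 : Matrix (Fin (2^b)) (Fin (2^b)) ℂ))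

def measSub {C D : Type*} [Fintype C] [Fintype D] (σ : Matrix (C × D) (C × D) ℂ) (j : C) :
    Matrix D D ℂ := Matrix.of fun y y' => σ (j, y) (j, y')

def measProb {C D : Type*} [Fintype C] [Fintype D] (σ : Matrix (C × D) (C × D) ℂ) (j : C) : ℝ :=
  ((measSub σ j).trace).re

def gibbs {n : Type*} [Fintype n] [DecidableEq n] (β : ℝ) {H : Matrix n n ℂ}
    (hH : H.IsHermitian) : Matrix n n ℂ :=
  ((hH.cfc (fun x => Real.exp (-β * x))).trace)⁻¹ • hH.cfc (fun x => Real.exp (-β * x))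

def vNEntropy {n : Type*} [Fintype n] [DecidableEq n] (M : Matrix n n ℂ) : ℝ :=
  if h : M.IsHermitian then -∑ i, (h.eigenvalues i) * Real.logb 2 (h.eigenvalues i) else 0

def iterState (n : ℕ) (U : ℕ → Matrix (Fin 2 × Fin (2^n)) (Fin 2 × Fin (2^n)) ℂ) :
    ℕ → Matrix (Fin (2^n)) (Fin (2^n)) ℂ
  | 0 => ((2:ℂ)^n)⁻¹ • 1
  | k+1 => ptraceFst (U k * ((Matrix.single 0 0 1) ⊗ₖ iterState n U k) * (U k)ᴴ)

section Aux

variable {n : Type*} [Fintype n] [DecidableEq n]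

lemma aux_sqrt_congr {A B : Matrix n n ℂ} (hA : A.PosSemidef) (hB : B.PosSemidef) (h : A = B) :
    hA.1.eigenvectorUnitary.1 *
    Matrix.diagonal ((fun x : ℝ => (x : ℂ)) ∘ (√·) ∘ hA.1.eigenvalues) *
    (star hA.1.eigenvectorUnitary : Matrix n n ℂ) = hB.1.eigenvectorUnitary.1 *
    Matrix.diagonal ((fun x : ℝ => (x : ℂ)) ∘ (√·) ∘ hB.1.eigenvalues) *
    (star hB.1.eigenvectorUnitary : Matrix n n ℂ) := by subst h; rfl

lemma aux_traceNorm_eq_sum_abs (Δ : Matrix n n ℂ) (hΔ : Δ.IsHermitian) :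
    traceNorm Δ = ∑ i, |hΔ.eigenvalues i| := by
  set V : Matrix n n ℂ := (hΔ.eigenvectorUnitary : Matrix n n ℂ) with hV
  have hVV : Vᴴ * V = 1 := by
    simpa [star_eq_conjTranspose] using (Matrix.mem_unitaryGroup_iff').mp hΔ.eigenvectorUnitary.2
  set S : Matrix n n ℂ := V * Matrix.diagonal (fun i => ((|hΔ.eigenvalues i| : ℝ) : ℂ)) * Vᴴ with hS
  have hSpsd : S.PosSemidef := by
    apply Matrix.PosSemidef.mul_mul_conjTranspose_same
    exact Matrix.PosSemidef.diagonal fun i => by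
      simpa using Complex.zero_le_real.mpr (abs_nonneg _)
  have hsq : S ^ 2 = Δᴴ * Δ := by
    have hspec : Δ = V * Matrix.diagonal (RCLike.ofReal ∘ hΔ.eigenvalues) * star V :=
      hΔ.spectral_theorem
    rw [hΔ.eq]
    calc S ^ 2 = V * (Matrix.diagonal (fun i => ((|hΔ.eigenvalues i| : ℝ) : ℂ)) * (Vᴴ * V)
        * Matrix.diagonal (fun i => ((|hΔ.eigenvalues i| : ℝ) : ℂ))) * Vᴴ := by
          simp [hS, pow_two]; noncomm_ring
      _ = V * Matrix.diagonal (fun i => ((hΔ.eigenvalues i : ℂ))^2) * Vᴴ := by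
          rw [hVV, mul_one, Matrix.diagonal_mul_diagonal]
          have : (fun i => ((|hΔ.eigenvalues i| : ℝ) : ℂ) * ((|hΔ.eigenvalues i| : ℝ) : ℂ))
              = fun i => ((hΔ.eigenvalues i : ℝ) : ℂ) ^ 2 := by
            funext i
            rw [← Complex.ofReal_mul, abs_mul_abs_self, pow_two, ← Complex.ofReal_mul]
          rw [this]
      _ = Δ * Δ := by
          conv_rhs => rw [hspec]
          rw [Matrix.star_eq_conjTranspose]
          calc V * Matrix.diagonal (fun i => ((hΔ.eigenvalues i : ℂ))^2) * Vᴴ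
              = V * ((Matrix.diagonal (RCLike.ofReal ∘ hΔ.eigenvalues) * (Vᴴ * V))
                * Matrix.diagonal (RCLike.ofReal ∘ hΔ.eigenvalues)) * Vᴴ := by
                  rw [hVV, mul_one, Matrix.diagonal_mul_diagonal]
                  have : (fun i => (RCLike.ofReal ∘ hΔ.eigenvalues : n → ℂ) i
                        * (RCLike.ofReal ∘ hΔ.eigenvalues : n → ℂ) i)
                      = fun i => ((hΔ.eigenvalues i : ℝ) : ℂ) ^ 2 := by
                    funext i; simp [pow_two]
                  rw [this]
            _ = _ := by noncomm_ring
  have hsqrt : S = (Matrix.posSemidef_conjTranspose_mul_self Δ).1.eigenvectorUnitary.1 *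
      Matrix.diagonal ((fun x : ℝ => (x : ℂ)) ∘ (√·) ∘ (Matrix.posSemidef_conjTranspose_mul_self Δ).1.eigenvalues) *
      (star (Matrix.posSemidef_conjTranspose_mul_self Δ).1.eigenvectorUnitary : Matrix n n ℂ) := by
    open scoped MatrixOrder in
    calc S = CFC.sqrt (Δᴴ * Δ) :=
          (CFC.sqrt_unique (by rw [← pow_two]; exact hsq) hSpsd.nonneg).symm
      _ = cfc Real.sqrt (Δᴴ * Δ) :=
          (CFC.sqrt_eq_real_sqrt _ (Matrix.posSemidef_conjTranspose_mul_self Δ).nonneg).trans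
            cfcₙ_eq_cfc
      _ = _ := (Matrix.posSemidef_conjTranspose_mul_self Δ).1.cfc_eq Real.sqrt
  have : traceNorm Δ = S.trace.re := by rw [traceNorm, ← hsqrt]
  rw [this, hS, Matrix.trace_mul_cycle, hVV, Matrix.one_mul, Matrix.trace_diagonal]
  simp

lemma aux_traceNorm_sub_comm (A B : Matrix n n ℂ) : traceNorm (A - B) = traceNorm (B - A) := by
  unfold traceNorm
  rw [aux_sqrt_congr (Matrix.posSemidef_conjTranspose_mul_self (A - B))
    (Matrix.posSemidef_conjTranspose_mul_self (B - A)) (by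
      rw [show A - B = -(B - A) by abel, Matrix.conjTranspose_neg, Matrix.neg_mul,
        Matrix.mul_neg, neg_neg])]

lemma aux_diag_re_nonneg {R : Matrix n n ℂ} (hR : R.PosSemidef) (i : n) : 0 ≤ (R i i).re := by
  have h := hR.dotProduct_mulVec_nonneg (Pi.single i 1)
  have h2 : (0 : ℂ) ≤ R i i := by
    simpa [dotProduct, Matrix.mulVec, Pi.single_apply, Finset.mul_sum] using h
  exact (Complex.le_def.mp h2).1

lemma aux_re_trace_mul_le (Δ Q : Matrix n n ℂ) (hΔ : Δ.IsHermitian) (htr : Δ.trace = 0)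
    (hQ : Q.PosSemidef) (hQ1 : (1 - Q).PosSemidef) :
    ((Q * Δ).trace).re ≤ traceNorm Δ / 2 := by
  set V : Matrix n n ℂ := (hΔ.eigenvectorUnitary : Matrix n n ℂ) with hV
  have hVV : Vᴴ * V = 1 := by
    simpa [star_eq_conjTranspose] using (Matrix.mem_unitaryGroup_iff').mp hΔ.eigenvectorUnitary.2
  set lam := hΔ.eigenvalues with hlam
  set D : Matrix n n ℂ := Matrix.diagonal (RCLike.ofReal ∘ lam) with hD
  have hspec : Δ = V * D * Vᴴ := hΔ.spectral_theorem
  set R : Matrix n n ℂ := Vᴴ * Q * V with hR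
  have hRpsd : R.PosSemidef := hQ.conjTranspose_mul_mul_same V
  have hR1psd : (1 - R).PosSemidef := by
    have : (1 : Matrix n n ℂ) - R = Vᴴ * (1 - Q) * V := by
      rw [Matrix.mul_sub, Matrix.sub_mul, Matrix.mul_one, hVV, hR]
    rw [this]
    exact hQ1.conjTranspose_mul_mul_same V
  have htrQD : (Q * Δ).trace = (R * D).trace := by
    rw [hspec, hR]
    rw [show Q * (V * D * Vᴴ) = (Q * V * D) * Vᴴ by noncomm_ring,
      Matrix.trace_mul_comm, show Vᴴ * (Q * V * D) = (Vᴴ * Q * V) * D by noncomm_ring]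
  have htrRD : (R * D).trace = ∑ i, R i i * (lam i : ℂ) := by
    simp [hD, Matrix.trace, Matrix.diag, Matrix.mul_diagonal]
  have hre : ((Q * Δ).trace).re = ∑ i, (R i i).re * lam i := by
    rw [htrQD, htrRD, Complex.re_sum]
    congr 1; funext i
    simp [Complex.mul_re]
  have hsum0 : ∑ i, lam i = 0 := by
    have h1 : Δ.trace = ∑ i, (lam i : ℂ) := by
      rw [hspec, Matrix.trace_mul_cycle, hVV, Matrix.one_mul, hD, Matrix.trace_diagonal]
      rfl
    have := h1 ▸ htr
    have h2 : ((∑ i, (lam i : ℂ))).re = 0 := by rw [this]; rfl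
    simpa [Complex.re_sum] using h2
  have hbound : ∀ i, (R i i).re * lam i ≤ max (lam i) 0 := by
    intro i
    have h0 : 0 ≤ (R i i).re := aux_diag_re_nonneg hRpsd i
    have h1 : (R i i).re ≤ 1 := by
      have := aux_diag_re_nonneg hR1psd i
      simp only [Matrix.sub_apply, Matrix.one_apply_eq, Complex.sub_re, Complex.one_re] at this
      linarith
    rcases le_or_gt 0 (lam i) with h | h
    · calc (R i i).re * lam i ≤ 1 * lam i := by apply mul_le_mul_of_nonneg_right h1 h
        _ = lam i := one_mul _
        _ ≤ max (lam i) 0 := le_max_left _ _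
    · calc (R i i).re * lam i ≤ 0 := mul_nonpos_of_nonneg_of_nonpos h0 h.le
        _ ≤ max (lam i) 0 := le_max_right _ _
  calc ((Q * Δ).trace).re = ∑ i, (R i i).re * lam i := hre
    _ ≤ ∑ i, max (lam i) 0 := Finset.sum_le_sum fun i _ => hbound i
    _ = ∑ i, (|lam i| + lam i) / 2 := by
        congr 1; funext i
        rcases abs_cases (lam i) with ⟨h1, h2⟩ | ⟨h1, h2⟩ <;>
          simp [max_eq_left, max_eq_right, h1, h2] <;> linarith
    _ = ((∑ i, |lam i|) + ∑ i, lam i) / 2 := by rw [← Finset.sum_add_distrib, ← Finset.sum_div]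
    _ = traceNorm Δ / 2 := by rw [hsum0, add_zero, aux_traceNorm_eq_sum_abs Δ hΔ]

variable {C D : Type*} [Fintype C] [Fintype D] [DecidableEq C] [DecidableEq D]

lemma aux_ptraceFst_trace (M : Matrix (C × D) (C × D) ℂ) : (ptraceFst M).trace = M.trace := by
  simp only [ptraceFst, Matrix.trace, Matrix.diag, Matrix.of_apply, Fintype.sum_prod_type]
  exact Finset.sum_comm

lemma aux_ptraceFst_isHermitian {M : Matrix (C × D) (C × D) ℂ} (hM : M.IsHermitian) :
    (ptraceFst M).IsHermitian := by
  ext y y'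
  simp only [Matrix.conjTranspose_apply, ptraceFst, Matrix.of_apply, star_sum]
  refine Finset.sum_congr rfl fun j _ => ?_
  rw [← Matrix.conjTranspose_apply, hM.eq]

lemma aux_trace_mul_ptraceFst (P : Matrix D D ℂ) (M : Matrix (C × D) (C × D) ℂ) :
    (P * ptraceFst M).trace = (((1 : Matrix C C ℂ) ⊗ₖ P) * M).trace := by
  simp only [Matrix.trace, Matrix.diag, Matrix.mul_apply, ptraceFst, Matrix.of_apply,
    Fintype.sum_prod_type, Matrix.kronecker_apply, Matrix.one_apply]
  simp only [ite_mul, one_mul, zero_mul]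
  have hR : ∀ (j : C) (y : D), (∑ p : C, ∑ q : D, if j = p then P y q * M (p, q) (j, y) else 0)
      = ∑ q : D, P y q * M (j, q) (j, y) := by
    intro j y
    rw [Finset.sum_comm]
    refine Finset.sum_congr rfl fun q _ => ?_
    simp
  calc ∑ y : D, ∑ q : D, P y q * ∑ j : C, M (j, q) (j, y)
      = ∑ y : D, ∑ q : D, ∑ j : C, P y q * M (j, q) (j, y) := by
        simp [Finset.mul_sum]
    _ = ∑ y : D, ∑ j : C, ∑ q : D, P y q * M (j, q) (j, y) := by
        refine Finset.sum_congr rfl fun y _ => ?_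
        exact Finset.sum_comm
    _ = ∑ j : C, ∑ y : D, ∑ q : D, P y q * M (j, q) (j, y) := Finset.sum_comm
    _ = ∑ j : C, ∑ y : D, (∑ p : C, ∑ q : D, if j = p then P y q * M (p, q) (j, y) else 0) := by
        refine Finset.sum_congr rfl fun j _ => Finset.sum_congr rfl fun y _ => (hR j y).symm

lemma aux_trace_mul_reindex {m : Type*} [Fintype m] [DecidableEq m] (e : m ≃ n)
    (Q : Matrix n n ℂ) (M : Matrix m m ℂ) :
    (Q * (Matrix.reindex e e M)).trace = (Q.submatrix e e * M).trace := by
  simp only [Matrix.trace, Matrix.diag, Matrix.mul_apply, Matrix.reindex_apply,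
    Matrix.submatrix_apply]
  rw [← Equiv.sum_comp e (fun i => ∑ j, Q i j * M (e.symm j) (e.symm i))]
  congr 1; funext i
  rw [← Equiv.sum_comp e (fun j => Q (e i) j * M (e.symm j) (e.symm (e i)))]
  simp

lemma aux_trace_submatrix_equiv {m : Type*} [Fintype m] [DecidableEq m] (e : m ≃ n)
    (Q : Matrix n n ℂ) : (Q.submatrix e e).trace = Q.trace := by
  simp only [Matrix.trace, Matrix.diag, Matrix.submatrix_apply]
  exact Equiv.sum_comp e (fun i => Q i i)

lemma aux_kron_one_psd {P : Matrix D D ℂ} (hP : P.PosSemidef) :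
    ((1 : Matrix C C ℂ) ⊗ₖ P).PosSemidef := by
  refine Matrix.PosSemidef.of_dotProduct_mulVec_nonneg ?_ ?_
  · ext ⟨i, y⟩ ⟨j, y'⟩
    simp only [Matrix.conjTranspose_apply, Matrix.kronecker_apply, Matrix.one_apply, star_mul']
    rw [← Matrix.conjTranspose_apply P, hP.1]
    by_cases h : i = j <;> simp [h, eq_comm]
  · intro x
    have key : dotProduct (star x) (((1 : Matrix C C ℂ) ⊗ₖ P) *ᵥ x)
        = ∑ j : C, dotProduct (star (fun y => x (j, y))) (P *ᵥ (fun y => x (j, y))) := by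
      simp only [dotProduct, Matrix.mulVec, Pi.star_apply, Fintype.sum_prod_type,
        Matrix.kronecker_apply, Matrix.one_apply, ite_mul, one_mul, zero_mul]
      congr 1; funext j
      congr 1; funext y
      rw [Finset.sum_comm]
      simp
    rw [key]
    exact Finset.sum_nonneg fun j _ => hP.dotProduct_mulVec_nonneg _

lemma aux_vmv_hermitian (ψ : n → ℂ) : (Matrix.vecMulVec ψ (star ψ)).IsHermitian := by
  ext i j
  simp [Matrix.conjTranspose_apply, Matrix.vecMulVec_apply, mul_comm]

lemma aux_vmv_psd (ψ : n → ℂ) : (Matrix.vecMulVec ψ (star ψ)).PosSemidef := by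
  refine Matrix.PosSemidef.of_dotProduct_mulVec_nonneg (aux_vmv_hermitian ψ) fun x => ?_
  have key : dotProduct (star x) ((Matrix.vecMulVec ψ (star ψ)) *ᵥ x)
      = star (dotProduct (star ψ) x) * (dotProduct (star ψ) x) := by
    simp only [dotProduct, Matrix.mulVec, Matrix.vecMulVec_apply, Pi.star_apply,
      Finset.sum_mul, Finset.mul_sum, star_sum, star_mul', star_star]
    rw [Finset.sum_comm]
    refine Finset.sum_congr rfl fun i _ => Finset.sum_congr rfl fun j _ => ?_
    ring
  rw [key]
  exact star_mul_self_nonneg _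

lemma aux_vmv_trace (ψ : n → ℂ) (hψ : (∑ i, Complex.normSq (ψ i)) = 1) :
    (Matrix.vecMulVec ψ (star ψ)).trace = 1 := by
  simp only [Matrix.trace, Matrix.diag, Matrix.vecMulVec_apply, Pi.star_apply]
  have : ∀ i, ψ i * star (ψ i) = (Complex.normSq (ψ i) : ℂ) := by
    intro i; rw [Complex.star_def, Complex.mul_conj]
  simp only [this]
  rw [← Complex.ofReal_sum, hψ]; norm_num

lemma aux_vmv_mul_trace (ψ : n → ℂ) (hψ : (∑ i, Complex.normSq (ψ i)) = 1) :
    ((Matrix.vecMulVec ψ (star ψ)) * (Matrix.vecMulVec ψ (star ψ))).trace = 1 := by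
  have key : (Matrix.vecMulVec ψ (star ψ)) * (Matrix.vecMulVec ψ (star ψ))
      = Matrix.vecMulVec ψ (star ψ) := by
    ext i j
    simp only [Matrix.mul_apply, Matrix.vecMulVec_apply, Pi.star_apply]
    have : ∀ k, ψ i * star (ψ k) * (ψ k * star (ψ j))
        = (Complex.normSq (ψ k) : ℂ) * (ψ i * star (ψ j)) := by
      intro k
      simp only [Complex.star_def]
      rw [show ψ i * (starRingEnd ℂ) (ψ k) * (ψ k * (starRingEnd ℂ) (ψ j))
        = ((starRingEnd ℂ) (ψ k) * ψ k) * (ψ i * (starRingEnd ℂ) (ψ j)) from by ring]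
      rw [Complex.conj_mul']
      rw [← Complex.ofReal_pow, Complex.sq_norm]
    simp only [this]
    rw [← Finset.sum_mul, ← Complex.ofReal_sum, hψ]; norm_num
  rw [key, aux_vmv_trace ψ hψ]

lemma aux_one_sub_vmv_psd (ψ : n → ℂ) (hψ : (∑ i, Complex.normSq (ψ i)) = 1) :
    ((1 : Matrix n n ℂ) - Matrix.vecMulVec ψ (star ψ)).PosSemidef := by
  refine Matrix.PosSemidef.of_dotProduct_mulVec_nonneg ?_ ?_
  · exact (Matrix.isHermitian_one).sub (aux_vmv_hermitian ψ)
  · intro x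
    set z : ℂ := dotProduct (star ψ) x with hz
    have h1 : dotProduct (star x) (((1 : Matrix n n ℂ)
        - Matrix.vecMulVec ψ (star ψ)) *ᵥ x)
        = ((∑ i, Complex.normSq (x i) : ℝ) : ℂ) - ((Complex.normSq z : ℝ) : ℂ) := by
      rw [Matrix.sub_mulVec, dotProduct_sub, Matrix.one_mulVec]
      congr 1
      · simp only [dotProduct, Pi.star_apply]
        rw [Complex.ofReal_sum]
        refine Finset.sum_congr rfl fun i _ => ?_
        rw [Complex.star_def, Complex.conj_mul']
        rw [← Complex.ofReal_pow, Complex.sq_norm]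
      · have key : dotProduct (star x) ((Matrix.vecMulVec ψ (star ψ)) *ᵥ x)
            = star z * z := by
          simp only [hz, dotProduct, Matrix.mulVec, Matrix.vecMulVec_apply, Pi.star_apply,
            Finset.sum_mul, Finset.mul_sum, star_sum, star_mul', star_star]
          rw [Finset.sum_comm]
          refine Finset.sum_congr rfl fun i _ => Finset.sum_congr rfl fun j _ => ?_
          ring
        rw [key, Complex.star_def, Complex.conj_mul']
        rw [← Complex.ofReal_pow, Complex.sq_norm]
    rw [h1, ← Complex.ofReal_sub]
    rw [Complex.zero_le_real]
    have hcs : Complex.normSq z ≤ (∑ i, Complex.normSq (ψ i)) * (∑ i, Complex.normSq (x i)) := by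
      set Ψ : EuclideanSpace ℂ n := (WithLp.equiv 2 (n → ℂ)).symm ψ with hΨdef
      set X : EuclideanSpace ℂ n := (WithLp.equiv 2 (n → ℂ)).symm x with hXdef
      have hin : (inner ℂ Ψ X : ℂ) = z := by
        simp only [PiLp.inner_apply, RCLike.inner_apply, hz, dotProduct, Pi.star_apply,
          hΨdef, hXdef, WithLp.equiv_symm_apply, PiLp.toLp_apply, Complex.star_def]
        exact Finset.sum_congr rfl fun i _ => mul_comm _ _
      have hnΨ : ‖Ψ‖ ^ 2 = ∑ i, Complex.normSq (ψ i) := by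
        rw [EuclideanSpace.norm_eq, Real.sq_sqrt (by positivity)]
        refine Finset.sum_congr rfl fun i _ => ?_
        rw [hΨdef, WithLp.equiv_symm_apply, PiLp.toLp_apply, Complex.sq_norm]
      have hnX : ‖X‖ ^ 2 = ∑ i, Complex.normSq (x i) := by
        rw [EuclideanSpace.norm_eq, Real.sq_sqrt (by positivity)]
        refine Finset.sum_congr rfl fun i _ => ?_
        rw [hXdef, WithLp.equiv_symm_apply, PiLp.toLp_apply, Complex.sq_norm]
      have hb := norm_inner_le_norm (𝕜 := ℂ) Ψ X
      rw [hin] at hb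
      have hb2 : ‖z‖ ^ 2 ≤ (‖Ψ‖ * ‖X‖) ^ 2 := pow_le_pow_left₀ (norm_nonneg _) hb 2
      rw [mul_pow, hnΨ, hnX] at hb2
      calc Complex.normSq z = ‖z‖ ^ 2 := by rw [Complex.sq_norm]
        _ ≤ _ := hb2
    have := hψ ▸ hcs
    linarith [this]

lemma aux_trace_mul_inputState {A B : Type*} [Fintype A] [Fintype B] [DecidableEq A]
    [DecidableEq B] (z : A) (c : ℂ) (Q : Matrix (A × B) (A × B) ℂ) :
    (Q * ((Matrix.single z z 1) ⊗ₖ (c • (1 : Matrix B B ℂ)))).trace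
      = (∑ y : B, Q (z, y) (z, y)) * c := by
  simp only [Matrix.trace, Matrix.diag, Matrix.mul_apply, Fintype.sum_prod_type,
    Matrix.kronecker_apply, Matrix.smul_apply, Matrix.one_apply, Matrix.single,
    Matrix.of_apply, smul_eq_mul, mul_ite, ite_mul, mul_zero, zero_mul, mul_one, one_mul,
    ite_and]
  simp only [Finset.sum_ite_eq, Finset.sum_ite_eq', Finset.mem_univ, if_true, Finset.sum_mul]
  rw [Finset.sum_comm]
  simp [Finset.sum_ite_eq, Finset.sum_ite_eq', Finset.mul_sum, Finset.sum_mul]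

end Aux

theorem stmt7 (a b c d : ℕ) (hn : a + b = c + d) (hd : a < d) (ε ε' : ℝ)
    (hε : ε + ε' ≤ 1/2 - (2:ℝ)^((a:ℤ) - d - 1))
    (ρt : Matrix (Fin (2^a) × Fin (2^b)) (Fin (2^a) × Fin (2^b)) ℂ)
    (hρt : IsDensity ρt) (hclose : traceDist ρt (inputState a b) ≤ ε)
    (e : (Fin (2^a) × Fin (2^b)) ≃ (Fin (2^c) × Fin (2^d))) :
    ¬ ∃ U ∈ Matrix.unitaryGroup (Fin (2^c) × Fin (2^d)) ℂ,
        ∃ ψ : Fin (2^d) → ℂ, (∑ i, Complex.normSq (ψ i)) = 1 ∧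
          traceDist (ptraceFst (U * (Matrix.reindex e e ρt) * Uᴴ))
            (Matrix.vecMulVec ψ (star ψ)) ≤ ε' := by
  rintro ⟨U, hU, ψ, hψ, hdist⟩
  obtain ⟨hρpsd, hρtr⟩ := hρt
  set P : Matrix (Fin (2^d)) (Fin (2^d)) ℂ := Matrix.vecMulVec ψ (star ψ) with hP
  set ρ' : Matrix (Fin (2^c) × Fin (2^d)) (Fin (2^c) × Fin (2^d)) ℂ :=
    Matrix.reindex e e ρt with hρ'
  set σ : Matrix (Fin (2^d)) (Fin (2^d)) ℂ := ptraceFst (U * ρ' * Uᴴ) with hσ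
  have hUU : Uᴴ * U = 1 := by
    simpa [Matrix.star_eq_conjTranspose] using (Matrix.mem_unitaryGroup_iff').mp hU
  have hUU' : U * Uᴴ = 1 := by
    simpa [Matrix.star_eq_conjTranspose] using (Matrix.mem_unitaryGroup_iff).mp hU
  -- basic facts about ρ' and σ
  have hρ'psd : ρ'.PosSemidef := by
    rw [hρ', Matrix.reindex_apply]
    exact hρpsd.submatrix _
  have hconjpsd : (U * ρ' * Uᴴ).PosSemidef := by
    simpa using hρ'psd.mul_mul_conjTranspose_same U
  have hρ'tr : ρ'.trace = 1 := by
    rw [hρ', Matrix.reindex_apply, aux_trace_submatrix_equiv e.symm ρt, hρtr]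
  have hσH : σ.IsHermitian := aux_ptraceFst_isHermitian hconjpsd.1
  have hσtr : σ.trace = 1 := by
    rw [hσ, aux_ptraceFst_trace, Matrix.trace_mul_cycle, hUU, Matrix.one_mul, hρ'tr]
  -- Step A : 1 - re tr (P σ) ≤ ε'
  have hPH : P.IsHermitian := aux_vmv_hermitian ψ
  have hPpsd : P.PosSemidef := aux_vmv_psd ψ
  have hPtr : P.trace = 1 := aux_vmv_trace ψ hψ
  have hstepA : 1 - ((P * σ).trace).re ≤ ε' := by
    have hΔH : (P - σ).IsHermitian := hPH.sub hσH
    have hΔtr : (P - σ).trace = 0 := by rw [Matrix.trace_sub, hPtr, hσtr, sub_self]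
    have h := aux_re_trace_mul_le (P - σ) P hΔH hΔtr hPpsd (aux_one_sub_vmv_psd ψ hψ)
    have heq : (P * (P - σ)).trace = 1 - (P * σ).trace := by
      rw [Matrix.mul_sub, Matrix.trace_sub, aux_vmv_mul_trace ψ hψ]
    rw [heq] at h
    have hnorm : traceNorm (P - σ) / 2 = traceDist σ P := by
      rw [traceDist, aux_traceNorm_sub_comm]
    rw [hnorm] at h
    have : (1 - (P * σ).trace).re = 1 - ((P * σ).trace).re := by
      simp [Complex.sub_re]
    rw [this] at h
    exact h.trans hdist
  -- Step B + C : re tr (P σ) = re tr (Q'' ρt) with Q'' psd, ≤ 1, trace 2^c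
  set Q : Matrix (Fin (2^c) × Fin (2^d)) (Fin (2^c) × Fin (2^d)) ℂ :=
    Uᴴ * ((1 : Matrix (Fin (2^c)) (Fin (2^c)) ℂ) ⊗ₖ P) * U with hQ
  set Q'' : Matrix (Fin (2^a) × Fin (2^b)) (Fin (2^a) × Fin (2^b)) ℂ :=
    Q.submatrix e e with hQ''
  have hkronpsd : ((1 : Matrix (Fin (2^c)) (Fin (2^c)) ℂ) ⊗ₖ P).PosSemidef :=
    aux_kron_one_psd hPpsd
  have hQpsd : Q.PosSemidef := hkronpsd.conjTranspose_mul_mul_same U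
  have hQ''psd : Q''.PosSemidef := hQpsd.submatrix _
  have hQ1psd : ((1 : Matrix (Fin (2^c) × Fin (2^d)) (Fin (2^c) × Fin (2^d)) ℂ) - Q).PosSemidef := by
    have hkron : (1 : Matrix (Fin (2^c)) (Fin (2^c)) ℂ) ⊗ₖ
        ((1 : Matrix (Fin (2^d)) (Fin (2^d)) ℂ) - P)
        = (1 : Matrix (Fin (2^c) × Fin (2^d)) (Fin (2^c) × Fin (2^d)) ℂ)
          - (1 : Matrix (Fin (2^c)) (Fin (2^c)) ℂ) ⊗ₖ P := by
      rw [← Matrix.one_kronecker_one (α := ℂ)]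
      ext ⟨i, y⟩ ⟨j, y'⟩
      simp only [Matrix.kronecker_apply, Matrix.sub_apply, mul_sub]
    have : (1 : Matrix (Fin (2^c) × Fin (2^d)) (Fin (2^c) × Fin (2^d)) ℂ) - Q
        = Uᴴ * ((1 : Matrix (Fin (2^c)) (Fin (2^c)) ℂ) ⊗ₖ
            ((1 : Matrix (Fin (2^d)) (Fin (2^d)) ℂ) - P)) * U := by
      rw [hkron, Matrix.mul_sub, Matrix.sub_mul, Matrix.mul_one, hUU, hQ]
    rw [this]
    exact (aux_kron_one_psd (aux_one_sub_vmv_psd ψ hψ)).conjTranspose_mul_mul_same U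
  have hQ''1psd : ((1 : Matrix (Fin (2^a) × Fin (2^b)) (Fin (2^a) × Fin (2^b)) ℂ)
      - Q'').PosSemidef := by
    have : (1 : Matrix (Fin (2^a) × Fin (2^b)) (Fin (2^a) × Fin (2^b)) ℂ) - Q''
        = ((1 : Matrix (Fin (2^c) × Fin (2^d)) (Fin (2^c) × Fin (2^d)) ℂ) - Q).submatrix e e := by
      ext p q
      simp [Matrix.sub_apply, Matrix.submatrix_apply, Matrix.one_apply,
        EmbeddingLike.apply_eq_iff_eq, hQ'']
    rw [this]
    exact hQ1psd.submatrix _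
  have hPσQ : (P * σ).trace = (Q'' * ρt).trace := by
    rw [hσ, aux_trace_mul_ptraceFst, hQ'', hQ]
    rw [show ((1 : Matrix (Fin (2^c)) (Fin (2^c)) ℂ) ⊗ₖ P) * (U * ρ' * Uᴴ)
      = (((1 : Matrix (Fin (2^c)) (Fin (2^c)) ℂ) ⊗ₖ P) * U * ρ') * Uᴴ by noncomm_ring,
      Matrix.trace_mul_comm,
      show Uᴴ * (((1 : Matrix (Fin (2^c)) (Fin (2^c)) ℂ) ⊗ₖ P) * U * ρ')
      = (Uᴴ * ((1 : Matrix (Fin (2^c)) (Fin (2^c)) ℂ) ⊗ₖ P) * U) * ρ' by noncomm_ring,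
      hρ', aux_trace_mul_reindex]
  -- Step E : closeness bound
  set ρ₀ := inputState a b with hρ₀
  have hρ₀H : ρ₀.IsHermitian := by
    ext ⟨i, y⟩ ⟨j, y'⟩
    simp only [hρ₀, inputState, Matrix.conjTranspose_apply, Matrix.kronecker_apply,
      Matrix.smul_apply, Matrix.one_apply, Matrix.single, Matrix.of_apply, smul_eq_mul,
      star_mul']
    by_cases h1 : i = 0 <;> by_cases h2 : j = 0 <;> by_cases h3 : y = y' <;>
      simp [h1, h2, h3, eq_comm, star_div₀, star_pow]
  have hρ₀tr : ρ₀.trace = 1 := by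
    rw [hρ₀, inputState, Matrix.trace_kronecker, Matrix.trace_smul, Matrix.trace_one]
    have h1 : (Matrix.single (0 : Fin (2^a)) 0 (1:ℂ)).trace = 1 := by
      simp [Matrix.trace, Matrix.diag, Matrix.single, and_self, Finset.sum_ite_eq]
    rw [h1, one_mul, smul_eq_mul, Fintype.card_fin]
    have h2b : ((2:ℂ)^b) ≠ 0 := by positivity
    push_cast
    field_simp
  have hstepE : ((Q'' * (ρt - ρ₀)).trace).re ≤ ε := by
    have hΔH : (ρt - ρ₀).IsHermitian := hρpsd.1.sub hρ₀H
    have hΔtr : (ρt - ρ₀).trace = 0 := by rw [Matrix.trace_sub, hρtr, hρ₀tr, sub_self]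
    have h := aux_re_trace_mul_le (ρt - ρ₀) Q'' hΔH hΔtr hQ''psd hQ''1psd
    exact h.trans hclose
  -- Step F : re tr (Q'' ρ₀) ≤ 2^(a - d)
  have hQ''tr : Q''.trace = ((2:ℂ)^c) := by
    rw [hQ'', aux_trace_submatrix_equiv, hQ, Matrix.trace_mul_cycle, hUU', Matrix.one_mul,
      Matrix.trace_kronecker, Matrix.trace_one, hPtr, mul_one]
    simp
  have htr0 : (Q'' * ρ₀).trace = (∑ y : Fin (2^b), Q'' (0, y) (0, y)) * ((2:ℂ)^b)⁻¹ := by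
    rw [hρ₀, inputState]
    exact aux_trace_mul_inputState 0 _ Q''
  have hstepF : ((Q'' * ρ₀).trace).re ≤ (2:ℝ)^((a:ℤ) - d) := by
    have hre : ((Q'' * ρ₀).trace).re = (∑ y : Fin (2^b), (Q'' (0, y) (0, y)).re) * ((2:ℝ)^b)⁻¹ := by
      rw [htr0, show ((2:ℂ)^b)⁻¹ = ((((2:ℝ)^b)⁻¹ : ℝ) : ℂ) by push_cast; rfl, mul_comm,
        Complex.re_ofReal_mul, Complex.re_sum, mul_comm]
    have hmono : (∑ y : Fin (2^b), (Q'' (0, y) (0, y)).re) ≤ (2:ℝ)^c := by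
      have h1 : (∑ y : Fin (2^b), (Q'' (0, y) (0, y)).re)
          ≤ ∑ x : Fin (2^a), ∑ y : Fin (2^b), (Q'' (x, y) (x, y)).re :=
        Finset.single_le_sum (f := fun x => ∑ y : Fin (2^b), (Q'' (x, y) (x, y)).re)
          (fun x _ => Finset.sum_nonneg fun y _ => aux_diag_re_nonneg hQ''psd _)
          (Finset.mem_univ 0)
      have h2 : ∑ x : Fin (2^a), ∑ y : Fin (2^b), (Q'' (x, y) (x, y)).re = Q''.trace.re := by
        simp [Matrix.trace, Matrix.diag, Complex.re_sum, Fintype.sum_prod_type]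
      have h3 : Q''.trace.re = (2:ℝ)^c := by
        rw [hQ''tr, show ((2:ℂ)^c) = (((2:ℝ)^c : ℝ) : ℂ) by push_cast; rfl, Complex.ofReal_re]
      rw [h2, h3] at h1
      exact h1
    have hcb : (2:ℝ)^c * ((2:ℝ)^b)⁻¹ = (2:ℝ)^((a:ℤ) - d) := by
      have h : (2:ℝ)^((a:ℤ) - d) = (2:ℝ)^a / (2:ℝ)^d := by
        rw [zpow_sub₀ (two_ne_zero)]
        norm_num [zpow_natCast]
      have key : (2:ℝ)^c * (2:ℝ)^d = (2:ℝ)^a * (2:ℝ)^b := by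
        rw [← pow_add, ← pow_add]; congr 1; omega
      rw [h]
      field_simp
      linarith [key]
    rw [hre]
    calc (∑ y : Fin (2^b), (Q'' (0, y) (0, y)).re) * ((2:ℝ)^b)⁻¹
        ≤ (2:ℝ)^c * ((2:ℝ)^b)⁻¹ := by
          apply mul_le_mul_of_nonneg_right hmono (by positivity)
      _ = (2:ℝ)^((a:ℤ) - d) := hcb
  -- final arithmetic
  have hfin1 : ((Q'' * ρt).trace).re = ((Q'' * ρ₀).trace).re + ((Q'' * (ρt - ρ₀)).trace).re := by
    rw [show Q'' * ρt = Q'' * ρ₀ + Q'' * (ρt - ρ₀) by noncomm_ring, Matrix.trace_add]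
    simp [Complex.add_re]
  have hpow : (2:ℝ)^((a:ℤ) - d) = 2 * (2:ℝ)^((a:ℤ) - d - 1) := by
    rw [show (a:ℤ) - d = ((a:ℤ) - d - 1) + 1 by ring, zpow_add₀ (two_ne_zero)]
    ring
  have hsmall : (2:ℝ)^((a:ℤ) - d - 1) ≤ 1/4 := by
    calc (2:ℝ)^((a:ℤ) - d - 1) ≤ (2:ℝ)^(-2 : ℤ) := by
          apply zpow_le_zpow_right₀ one_le_two
          omega
      _ = 1/4 := by norm_num
  have hPσ : ((P * σ).trace).re = ((Q'' * ρt).trace).re := by rw [hPσQ]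
  linarith [hstepA, hstepE, hstepF, hfin1, hPσ]

end
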